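/- If Ω ≼ Ω' (Ω is less connecting than Ω'), then every counter-example (σ_N, P') to Ω' ⊨ Obs induces a counter-example (σ_N, P) to Ω ⊨ Obs with the same negative trace and positive image contained in that of P'. In particular CED(Ω, Obs) ≼ CED(Ω', Obs). -/

import Mathlib

open Classical in
/-- Projection of a trace onto a sub-alphabet. -/
noncomputable def proj {A : Type*} (s : Set A) : List A → List A
  | [] => []
  | a :: σ => if a ∈ s then a :: proj s σ else proj s σ

/-- A distribution of the alphabet `A`: a family of sub-alphabets covering `A`. -/
def AlphabetDistribution {A : Type*} (Ω : Set (Set A)) : Prop := ⋃₀ Ω = Set.univ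

/-- A language agrees with an observation function (`L ⊨ Obs`). -/
def Agrees {A : Type*} (L : Set (List A)) (Obs : List A → Option Bool) : Prop :=
  ∀ σ b, Obs σ = some b → (σ ∈ L ↔ b = true)

/-- `L` is a product language over the distribution `Ω`: it is the parallel
composition of a family of languages over the component alphabets. -/
def ProductLang {A : Type*} (Ω : Set (Set A)) (L : Set (List A)) : Prop :=
  ∃ Ls : Set A → Set (List A),
    (∀ s ∈ Ω, ∀ σ ∈ Ls s, ∀ a ∈ σ, a ∈ s) ∧
    L = {σ | ∀ s ∈ Ω, proj s σ ∈ Ls s}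

/-- `Ω ⊨ Obs`: some product language over `Ω` agrees with `Obs`. -/
def Models {A : Type*} (Ω : Set (Set A)) (Obs : List A → Option Bool) : Prop :=
  ∃ L, ProductLang Ω L ∧ Agrees L Obs

/-- A counter-example to `Ω ⊨ Obs`: a negative observation `σN` together with,
for each component alphabet, a positive observation with matching projection. -/
def IsCED {A : Type*} (Ω : Set (Set A)) (Obs : List A → Option Bool)
    (σN : List A) (P : Set A → List A) : Prop :=
  Obs σN = some false ∧
  ∀ s ∈ Ω, Obs (P s) = some true ∧ proj s σN = proj s (P s)

/-- The connectivity preorder: `Ω` is less connecting than `Ω'`. -/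
def lessConn {A : Type*} (Ω Ω' : Set (Set A)) : Prop :=
  ∀ s ∈ Ω, ∃ t ∈ Ω', s ⊆ t

lemma proj_proj {A : Type*} {s t : Set A} (hst : s ⊆ t) :
    ∀ σ : List A, proj s (proj t σ) = proj s σ := by
  intro σ
  induction σ with
  | nil => simp [proj]
  | cons a σ ih =>
    by_cases ha : a ∈ t
    · by_cases has : a ∈ s <;> simp [proj, ha, has, ih]
    · have has : a ∉ s := fun hs => ha (hst hs)
      simp [proj, ha, has, ih]

/-- If `Ω ≼ Ω'`, every counter-example to `Ω' ⊨ Obs` induces a counter-example to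
`Ω ⊨ Obs` with the same negative trace and positive image contained in that of the
original (hence `CED(Ω,Obs) ≼ CED(Ω',Obs)`). -/
theorem ced_mono_lessConn {A : Type*} (Ω Ω' : Set (Set A))
    (Obs : List A → Option Bool) (h : lessConn Ω Ω')
    (σN : List A) (P' : Set A → List A) (hce : IsCED Ω' Obs σN P') :
    ∃ P : Set A → List A, IsCED Ω Obs σN P ∧ ∀ s ∈ Ω, ∃ t ∈ Ω', P s = P' t := by
  classical
  refine ⟨fun s => if hs : s ∈ Ω then P' (Classical.choose (h s hs)) else [], ⟨hce.1, ?_⟩, ?_⟩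
  · intro s hs
    obtain ⟨ht, hst⟩ := Classical.choose_spec (h s hs)
    obtain ⟨hpos, hproj⟩ := hce.2 _ ht
    refine ⟨by simp [hs, hpos], ?_⟩
    simp only [hs, dif_pos]
    rw [← proj_proj hst σN, hproj, proj_proj hst]
  · intro s hs
    exact ⟨Classical.choose (h s hs), (Classical.choose_spec (h s hs)).1, by simp [hs]⟩
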